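/- The class (V_L)_DI of directly indecomposable members of V_L is not axiomatizable by any set of first-order sentences. -/

import Mathlib

open FirstOrder Language

universe u v w

namespace Paper

/-- The direct product of two `L`-structures, with pointwise operations. -/
instance prodStructure {L : FirstOrder.Language.{v, w}} (A : Type*) (B : Type*)
    [L.Structure A] [L.Structure B] : L.Structure (A × B) where
  funMap f x := (Structure.funMap f fun i => (x i).1, Structure.funMap f fun i => (x i).2)
  RelMap r x := Structure.RelMap r (fun i => (x i).1) ∧ Structure.RelMap r fun i => (x i).2

/-- An algebra is directly indecomposable if it is nontrivial and not isomorphic to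
a direct product of two nontrivial algebras. -/
def DirectlyIndecomposable (L : FirstOrder.Language.{v, w}) (A : Type u)
    [L.Structure A] : Prop :=
  Nontrivial A ∧
    ¬∃ (B : Type u) (C : Type u) (_ : L.Structure B) (_ : L.Structure C),
      Nontrivial B ∧ Nontrivial C ∧ Nonempty (A ≃[L] B × C)

end Paper

namespace Paper

/-- The function symbols `{+, *, 0, 1}` of the language of `V_L`. -/
inductive LFn : ℕ → Type
  | add : LFn 2
  | mul : LFn 2
  | zero : LFn 0
  | one : LFn 0

/-- The language `{+, *, 0, 1}`. -/
def LL : FirstOrder.Language := ⟨LFn, fun _ => Empty⟩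

/-- The variable `x`. -/
def xT : LL.Term (Empty ⊕ Fin 1) := Term.var (Sum.inr 0)

/-- The closed term `0`. -/
def zeroT {α : Type*} : LL.Term α := Term.func LFn.zero ![]

/-- The closed term `1`. -/
def oneT {α : Type*} : LL.Term α := Term.func LFn.one ![]

/-- `t + u`. -/
def addT {α : Type*} (t u : LL.Term α) : LL.Term α := Term.func LFn.add ![t, u]

/-- `t * u`. -/
def mulT {α : Type*} (t u : LL.Term α) : LL.Term α := Term.func LFn.mul ![t, u]

/-- The theory of `V_L`: `x + 0 = x`, `x + 1 = x * 1`, `x * 0 = 0`. -/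
def TL : LL.Theory :=
  {((addT xT zeroT).bdEqual xT).alls,
   ((addT xT oneT).bdEqual (mulT xT oneT)).alls,
   ((mulT xT zeroT).bdEqual zeroT).alls}

end Paper

/-! ### Auxiliary development -/

namespace Paper

open FirstOrder Language Structure Filter

/-- Double option. -/
abbrev OO (γ : Type*) : Type _ := Option (Option γ)

/-- The underlying set of a "gadget" algebra. -/
abbrev Gd (α β : Type*) : Type _ := OO α ⊕ OO β

section Gadget

variable {α β : Type*}

/-- Collapse each row to its basepoint. -/
def rho : Gd α β → Gd α β
  | .inl _ => .inl none
  | .inr _ => .inr none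

def gAdd (x y : Gd α β) : Gd α β :=
  match y with
  | .inl (some none) => rho x
  | .inr (some none) => rho x
  | _ => x

def gMul (x y : Gd α β) : Gd α β :=
  match y with
  | .inr _ => rho x
  | .inl _ => .inl none

instance gadStr : LL.Structure (Gd α β) where
  funMap {n} f v :=
    match n, f, v with
    | _, LFn.add, v => gAdd (v 0) (v 1)
    | _, LFn.mul, v => gMul (v 0) (v 1)
    | _, LFn.zero, _ => Sum.inl none
    | _, LFn.one, _ => Sum.inr (some none)
  RelMap {n} r := Empty.elim r

@[simp] lemma gad_funMap_add (v : Fin 2 → Gd α β) :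
    Structure.funMap (L := LL) (M := Gd α β) LFn.add v = gAdd (v 0) (v 1) := rfl

@[simp] lemma gad_funMap_mul (v : Fin 2 → Gd α β) :
    Structure.funMap (L := LL) (M := Gd α β) LFn.mul v = gMul (v 0) (v 1) := rfl

@[simp] lemma gad_funMap_zero (v : Fin 0 → Gd α β) :
    Structure.funMap (L := LL) (M := Gd α β) LFn.zero v = Sum.inl none := rfl

@[simp] lemma gad_funMap_one (v : Fin 0 → Gd α β) :
    Structure.funMap (L := LL) (M := Gd α β) LFn.one v = Sum.inr (some none) := rfl

lemma gAdd_zero (x : Gd α β) : gAdd x (Sum.inl none) = x := rfl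

lemma gAdd_one (x : Gd α β) : gAdd x (Sum.inr (some none)) = rho x := rfl

lemma gMul_zero (x : Gd α β) : gMul x (Sum.inl none) = Sum.inl none := rfl

lemma gMul_one (x : Gd α β) : gMul x (Sum.inr (some none)) = rho x := rfl

/-- Every gadget algebra is a model of `TL`. -/
lemma gd_model_TL : (Gd α β) ⊨ TL := by
  rw [Theory.model_iff]
  intro φ hφ
  simp only [TL, Set.mem_insert_iff, Set.mem_singleton_iff] at hφ
  rcases hφ with rfl | rfl | rfl <;>
  · simp only [Sentence.Realize, Formula.Realize, BoundedFormula.realize_alls,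
      BoundedFormula.realize_bdEqual, addT, mulT, xT, zeroT, oneT,
      Term.realize_func, Term.realize_var]
    intro xs
    rfl

/-- A finite algebra of prime cardinality is directly indecomposable. -/
lemma di_of_prime (A : Type) [LL.Structure A] [Fintype A] (hnt : Nontrivial A)
    (hp : Nat.Prime (Fintype.card A)) : DirectlyIndecomposable LL A := by
  refine ⟨hnt, ?_⟩
  rintro ⟨B, C, iB, iC, hB, hC, ⟨f⟩⟩
  have e : A ≃ B × C := f.toEquiv
  haveI : Finite (B × C) := Finite.of_equiv A e
  haveI : Nonempty B := hB.to_nonempty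
  haveI : Nonempty C := hC.to_nonempty
  haveI : Finite B := Finite.prod_left C
  haveI : Finite C := Finite.prod_right B
  have h2 : Fintype.card A = Nat.card B * Nat.card C := by
    rw [← Nat.card_eq_fintype_card, Nat.card_congr e, Nat.card_prod]
  have hb : 1 < Nat.card B := Finite.one_lt_card_iff_nontrivial.mpr hB
  have hc : 1 < Nat.card C := Finite.one_lt_card_iff_nontrivial.mpr hC
  rcases (Nat.Prime.eq_one_or_self_of_dvd hp (Nat.card B) ⟨Nat.card C, h2⟩) with h | h
  · omega
  · have hpos : 0 < Nat.card B := by omega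
    have : Nat.card C = 1 := by
      have := h2
      rw [← h] at this
      nlinarith [this, hb, hc]
    omega

end Gadget

/-- Indices: `n` such that `2n+5` is prime (and `n ≥ 1`). -/
def PIdxSet : Set ℕ := {n | 1 ≤ n ∧ Nat.Prime (2 * n + 5)}

lemma pidxSet_infinite : PIdxSet.Infinite := by
  apply Set.infinite_of_not_bddAbove
  rintro ⟨m, hm⟩
  obtain ⟨p, hple, hp⟩ := Nat.exists_infinite_primes (2 * m + 9)
  have hodd : Odd p := hp.odd_of_ne_two (by omega)
  obtain ⟨k, hk⟩ := hodd
  have h1 : (k - 2) ∈ PIdxSet := by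
    refine ⟨by omega, ?_⟩
    have h2 : 2 * (k - 2) + 5 = p := by omega
    rw [h2]; exact hp
  have := hm h1
  omega

abbrev PIdx : Type := PIdxSet

instance : Infinite PIdx := Set.infinite_coe_iff.mpr pidxSet_infinite

lemma pidx_one_le (i : PIdx) : 1 ≤ i.1 := i.2.1

noncomputable section

/-- The ultrafilter. -/
def uu : Ultrafilter PIdx := hyperfilter PIdx

/-- The family of gadget algebras. -/
abbrev Mi (i : PIdx) : Type := Gd (Fin i.1) (Fin (i.1 + 1))

instance (i : PIdx) : Nonempty (Mi i) := ⟨Sum.inl none⟩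

/-- The ultraproduct. -/
abbrev UP : Type := (uu : Filter PIdx).Product Mi

/-- Ultraproduct of the first clouds. -/
abbrev A0 : Type := (uu : Filter PIdx).Product (fun i => Fin i.1)

/-- Ultraproduct of the second clouds. -/
abbrev A1 : Type := (uu : Filter PIdx).Product (fun i => Fin (i.1 + 1))

lemma ev_big (k : ℕ) : ∀ᶠ i : PIdx in (uu : Filter PIdx), k < i.1 := by
  rw [Filter.eventually_iff]
  apply mem_hyperfilter_of_finite_compl
  have hsub : {i : PIdx | k < i.1}ᶜ ⊆ (Subtype.val) ⁻¹' (Set.Iic k) := by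
    intro i hi
    simp only [Set.mem_compl_iff, Set.mem_setOf_eq, not_lt] at hi
    exact hi
  exact Set.Finite.subset ((Set.finite_Iic k).preimage (Subtype.val_injective.injOn)) hsub

def cseq (k : ℕ) : ∀ i : PIdx, Fin i.1 := fun i => ⟨min k (i.1 - 1), by
  have := pidx_one_le i; omega⟩

instance A0_infinite : Infinite A0 := by
  apply Infinite.of_injective (fun k => (Quotient.mk'' (cseq k) : A0))
  intro k k' h
  have h2 : ∀ᶠ i in (uu : Filter PIdx), cseq k i = cseq k' i := Quotient.exact' h
  by_contra hne
  obtain ⟨i, hi1, hi2⟩ := (h2.and (ev_big (max k k'))).exists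
  have h3 : min k (i.1 - 1) = min k' (i.1 - 1) := congrArg Fin.val hi1
  rw [min_eq_left (by omega), min_eq_left (by omega)] at h3
  exact hne h3

/-- Pointwise `castSucc`, an injection `A0 → A1`. -/
def f01 : A0 → A1 :=
  Quotient.map' (fun x i => Fin.castSucc (x i))
    (fun x y h => Filter.Eventually.mono h fun i hi => congrArg Fin.castSucc hi)

lemma f01_inj : Function.Injective f01 := by
  intro a b
  refine Quotient.inductionOn₂' a b (fun x y hxy => ?_)
  have hxy2 : (Quotient.mk'' (fun i => Fin.castSucc (x i)) : A1) =
      Quotient.mk'' (fun i => Fin.castSucc (y i)) := hxy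
  have h2 : ∀ᶠ i in (uu : Filter PIdx), Fin.castSucc (x i) = Fin.castSucc (y i) :=
    Quotient.exact' hxy2
  exact Quotient.sound' (h2.mono fun i hi => Fin.castSucc_injective _ hi)

/-- Whether a sequence is eventually the top element. -/
def flast (x : ∀ i : PIdx, Fin (i.1 + 1)) : Prop :=
  ∀ᶠ i in (uu : Filter PIdx), (x i).1 = i.1

def trunc (x : ∀ i : PIdx, Fin (i.1 + 1)) : ∀ i : PIdx, Fin i.1 := fun i =>
  ⟨min (x i).1 (i.1 - 1), by have := pidx_one_le i; omega⟩

open Classical in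
def f10 : A1 → Bool × A0 := fun z =>
  Quotient.liftOn' z
    (fun x => if flast x then (true, (Quotient.mk'' (cseq 0) : A0))
      else (false, (Quotient.mk'' (trunc x) : A0)))
    (by
      intro x y h
      dsimp only
      have h' : ∀ᶠ i in (uu : Filter PIdx), x i = y i := h
      have hiff : flast x ↔ flast y :=
        eventually_congr (h'.mono fun i hi => by rw [hi])
      by_cases hx : flast x
      · rw [if_pos hx, if_pos (hiff.mp hx)]
      · rw [if_neg hx, if_neg (fun hy => hx (hiff.mpr hy))]
        refine congrArg (Prod.mk false) (Quotient.sound' (h'.mono fun i hi => ?_))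
        simp only [trunc, hi])

lemma f10_inj : Function.Injective f10 := by
  classical
  intro a b
  refine Quotient.inductionOn₂' a b (fun x y hxy => ?_)
  have hxy' : (if flast x then (true, (Quotient.mk'' (cseq 0) : A0))
      else (false, (Quotient.mk'' (trunc x) : A0))) =
      (if flast y then (true, (Quotient.mk'' (cseq 0) : A0))
      else (false, (Quotient.mk'' (trunc y) : A0))) := hxy
  by_cases hx : flast x <;> by_cases hy : flast y
  · exact Quotient.sound' ((hx.and hy).mono fun i hi => Fin.ext (by rw [hi.1, hi.2]))
  · rw [if_pos hx, if_neg hy] at hxy'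
    exact absurd (congrArg Prod.fst hxy') (by simp)
  · rw [if_neg hx, if_pos hy] at hxy'
    exact absurd (congrArg Prod.fst hxy') (by simp)
  · rw [if_neg hx, if_neg hy] at hxy'
    have h2 : (Quotient.mk'' (trunc x) : A0) = Quotient.mk'' (trunc y) :=
      congrArg Prod.snd hxy'
    have h3 : ∀ᶠ i in (uu : Filter PIdx), trunc x i = trunc y i := Quotient.exact' h2
    have hx' : ∀ᶠ i in (uu : Filter PIdx), ¬(x i).1 = i.1 :=
      (Ultrafilter.eventually_not).mpr hx
    have hy' : ∀ᶠ i in (uu : Filter PIdx), ¬(y i).1 = i.1 :=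
      (Ultrafilter.eventually_not).mpr hy
    refine Quotient.sound' (((h3.and hx').and hy').mono fun i hi => ?_)
    obtain ⟨⟨h4, h5⟩, h6⟩ := hi
    have hxle : (x i).1 ≤ i.1 := Nat.lt_succ_iff.mp (x i).2
    have hyle : (y i).1 ≤ i.1 := Nat.lt_succ_iff.mp (y i).2
    have h7 : min (x i).1 (i.1 - 1) = min (y i).1 (i.1 - 1) := congrArg Fin.val h4
    rw [min_eq_left (by omega), min_eq_left (by omega)] at h7
    exact Fin.ext h7

/-- The two clouds of the ultraproduct are equinumerous. -/
def eqA : A1 ≃ A0 := by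
  have h1 : Cardinal.mk A0 ≤ Cardinal.mk A1 := Cardinal.mk_le_of_injective f01_inj
  have h2 : Cardinal.mk A1 ≤ Cardinal.mk (Bool × A0) := Cardinal.mk_le_of_injective f10_inj
  have hBool : Cardinal.mk (Bool × A0) ≤ Cardinal.mk (A0 × A0) := by
    obtain ⟨x, y, hne⟩ := exists_pair_ne A0
    refine Cardinal.mk_le_of_injective (f := fun p => (if p.1 then x else y, p.2)) ?_
    rintro ⟨b, a⟩ ⟨b', a'⟩ h
    simp only [Prod.mk.injEq] at h
    obtain ⟨h1', h2'⟩ := h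
    cases b <;> cases b' <;> simp_all
  have hself : Cardinal.mk (A0 × A0) = Cardinal.mk A0 := by
    simp only [Cardinal.mk_prod, Cardinal.lift_id]
    exact Cardinal.mul_eq_self (Cardinal.aleph0_le_mk A0)
  exact (Cardinal.eq.mp (le_antisymm (h2.trans (hBool.trans_eq hself)) h1)).some

/-! ### The decomposition of the ultraproduct -/

/-- The `Bool` factor. -/
instance boolStr : LL.Structure Bool where
  funMap {n} f v :=
    match n, f, v with
    | _, LFn.add, v => v 0
    | _, LFn.mul, v => (v 1) && (v 0)
    | _, LFn.zero, _ => false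
    | _, LFn.one, _ => true
  RelMap {n} r := Empty.elim r

/-- The second factor: a double option with nearly trivial operations. -/
instance ooStr {γ : Type*} : LL.Structure (OO γ) where
  funMap {n} f v :=
    match n, f, v with
    | _, LFn.add, v => match v 1 with
      | some none => none
      | _ => v 0
    | _, LFn.mul, _ => none
    | _, LFn.zero, _ => none
    | _, LFn.one, _ => some none
  RelMap {n} r := Empty.elim r

instance : Nontrivial (OO A0) := ⟨⟨none, some none, by simp⟩⟩

/-- Representative sequences for elements of `Bool × OO A0`. -/
def rep : Bool × OO A0 → ∀ i : PIdx, Mi i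
  | (false, none) => fun _ => Sum.inl none
  | (false, some none) => fun _ => Sum.inl (some none)
  | (false, some (some a)) => fun i => Sum.inl (some (some (a.out i)))
  | (true, none) => fun _ => Sum.inr none
  | (true, some none) => fun _ => Sum.inr (some none)
  | (true, some (some a)) => fun i => Sum.inr (some (some ((eqA.symm a).out i)))

def Psi (w : Bool × OO A0) : UP := Quotient.mk'' (rep w)

lemma rep_fst_none (w : Bool × OO A0) (i : PIdx) :
    rep (w.1, none) i = rho (rep w i) := by
  rcases w with ⟨b, c⟩
  cases b <;> rcases c with _ | (_ | a) <;> rfl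

def ext0 (x : ∀ i : PIdx, Mi i) (i : PIdx) : Fin i.1 :=
  match x i with
  | Sum.inl (some (some a)) => a
  | _ => ⟨0, pidx_one_le i⟩

lemma ext0_eq (x : ∀ i : PIdx, Mi i) (i : PIdx) (a : Fin i.1)
    (h : x i = Sum.inl (some (some a))) : ext0 x i = a := by
  unfold ext0; rw [h]

def ext1 (x : ∀ i : PIdx, Mi i) (i : PIdx) : Fin (i.1 + 1) :=
  match x i with
  | Sum.inr (some (some a)) => a
  | _ => ⟨0, Nat.succ_pos _⟩

lemma ext1_eq (x : ∀ i : PIdx, Mi i) (i : PIdx) (a : Fin (i.1 + 1))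
    (h : x i = Sum.inr (some (some a))) : ext1 x i = a := by
  unfold ext1; rw [h]

lemma psi_inj : Function.Injective Psi := by
  have key : ∀ w w' : Bool × OO A0,
      (∀ᶠ i in (uu : Filter PIdx), rep w i = rep w' i) → w = w' := by
    rintro ⟨b, c⟩ ⟨b', c'⟩ h
    obtain ⟨i, hi⟩ := h.exists
    rcases c with _ | (_ | a) <;> rcases c' with _ | (_ | a') <;> cases b <;> cases b' <;>
      first
      | rfl
      | simp [rep] at hi
    · -- (false, some (some a)) = (false, some (some a'))
      have h2 : (Quotient.mk'' a.out : A0) = Quotient.mk'' a'.out :=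
        Quotient.sound' (h.mono fun j hj => by
          simpa only [rep, Sum.inl.injEq, Option.some.injEq] using hj)
      erw [Quotient.out_eq', Quotient.out_eq'] at h2
      rw [h2]
    · -- (true, some (some a)) = (true, some (some a'))
      have h2 : (Quotient.mk'' (eqA.symm a).out : A1) = Quotient.mk'' (eqA.symm a').out :=
        Quotient.sound' (h.mono fun j hj => by
          simpa only [rep, Sum.inr.injEq, Option.some.injEq] using hj)
      erw [Quotient.out_eq', Quotient.out_eq'] at h2
      rw [eqA.symm.injective h2]
  intro w w' h
  have h2 : (Quotient.mk'' (rep w) : UP) = Quotient.mk'' (rep w') := h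
  exact key w w' (Quotient.exact' h2)

lemma psi_surj : Function.Surjective Psi := by
  intro z
  refine Quotient.inductionOn' z (fun x => ?_)
  rcases (uu.em (fun i => (x i).isLeft = true)) with hL | hL
  · -- left row
    rcases (uu.em (fun i => x i = Sum.inl none)) with h0 | h0
    · exact ⟨(false, none), Quotient.sound' (h0.mono fun i hi => by rw [hi]; rfl)⟩
    rcases (uu.em (fun i => x i = Sum.inl (some none))) with h1 | h1
    · exact ⟨(false, some none), Quotient.sound' (h1.mono fun i hi => by rw [hi]; rfl)⟩
    · -- cloud
      refine ⟨(false, some (some (Quotient.mk'' (ext0 x)))), ?_⟩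
      have hout : ∀ᶠ i in (uu : Filter PIdx),
          (Quotient.mk'' (ext0 x) : A0).out i = ext0 x i :=
        @Quotient.mk_out' _ ((uu : Filter PIdx).productSetoid fun i : PIdx => Fin i.1)
          (ext0 x)
      refine Quotient.sound' ((((hL.and h0).and h1).and hout).mono fun i hi => ?_)
      obtain ⟨⟨⟨hl, hn0⟩, hn1⟩, ho⟩ := hi
      show Sum.inl (some (some ((Quotient.mk'' (ext0 x) : A0).out i))) = x i
      rw [ho]
      rcases hxi : x i with c | c
      · rcases c with _ | (_ | a)
        · exact absurd hxi hn0
        · exact absurd hxi hn1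
        · rw [ext0_eq x i a hxi]
      · rw [hxi] at hl; simp at hl
  · -- right row
    rcases (uu.em (fun i => x i = Sum.inr none)) with h0 | h0
    · exact ⟨(true, none), Quotient.sound' (h0.mono fun i hi => by rw [hi]; rfl)⟩
    rcases (uu.em (fun i => x i = Sum.inr (some none))) with h1 | h1
    · exact ⟨(true, some none), Quotient.sound' (h1.mono fun i hi => by rw [hi]; rfl)⟩
    · refine ⟨(true, some (some (eqA (Quotient.mk'' (ext1 x))))), ?_⟩
      have hout : ∀ᶠ i in (uu : Filter PIdx),
          (eqA.symm (eqA (Quotient.mk'' (ext1 x)))).out i = ext1 x i := by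
        erw [Equiv.symm_apply_apply]
        exact @Quotient.mk_out' _
          ((uu : Filter PIdx).productSetoid fun i : PIdx => Fin (i.1 + 1)) (ext1 x)
      refine Quotient.sound' ((((hL.and h0).and h1).and hout).mono fun i hi => ?_)
      obtain ⟨⟨⟨hl, hn0⟩, hn1⟩, ho⟩ := hi
      show Sum.inr (some (some ((eqA.symm (eqA (Quotient.mk'' (ext1 x)))).out i))) = x i
      rw [ho]
      rcases hxi : x i with c | c
      · rw [hxi] at hl; simp at hl
      · rcases c with _ | (_ | a)
        · exact absurd hxi hn0
        · exact absurd hxi hn1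
        · rw [ext1_eq x i a hxi]

/-- `funMap` on the ultraproduct, computed pointwise. -/
lemma up_funMap {n : ℕ} (f : LL.Functions n) (x : Fin n → ∀ i : PIdx, Mi i) :
    Structure.funMap (M := UP) f (fun j => Quotient.mk'' (x j)) =
      Quotient.mk'' (fun i => Structure.funMap (M := Mi i) f (fun j => x j i)) :=
  funMap_quotient_mk' _ f x

lemma psi_map_fun2 (f : LL.Functions 2) (w0 w1 : Bool × OO A0) :
    Psi (Structure.funMap f ![w0, w1]) = Structure.funMap f ![Psi w0, Psi w1] := by
  have hv : (![Psi w0, Psi w1] : Fin 2 → UP) =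
      fun j => Quotient.mk'' (![rep w0, rep w1] j) := by
    funext j; fin_cases j <;> rfl
  rw [hv, up_funMap f (![rep w0, rep w1])]
  cases f with
  | add =>
    rcases w1 with ⟨b1, c1⟩
    rcases c1 with _ | (_ | a1)
    · -- second argument is a row basepoint: addition is the identity
      show Psi (w0.1, w0.2) = _
      refine congrArg _ (funext fun i => ?_)
      show rep w0 i = gAdd (rep w0 i) (rep (b1, none) i)
      cases b1 <;> rfl
    · -- second argument is e or 1 : addition is rho
      show Psi (w0.1, none) = _
      refine congrArg _ (funext fun i => ?_)
      rw [rep_fst_none]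
      show rho (rep w0 i) = gAdd (rep w0 i) (rep (b1, some none) i)
      cases b1 <;> rfl
    · -- second argument is a cloud element: addition is the identity
      show Psi (w0.1, w0.2) = _
      refine congrArg _ (funext fun i => ?_)
      show rep w0 i = gAdd (rep w0 i) (rep (b1, some (some a1)) i)
      cases b1 <;> rfl
  | mul =>
    rcases w1 with ⟨b1, c1⟩
    cases b1
    · -- multiplier in row 0 : result is zero
      show Psi (false && w0.1, none) = _
      refine congrArg _ (funext fun i => ?_)
      show Sum.inl none = gMul (rep w0 i) (rep (false, c1) i)
      rcases c1 with _ | (_ | a1) <;> rfl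
    · -- multiplier in row 1 : result is rho
      show Psi (true && w0.1, none) = _
      rw [Bool.true_and]
      refine congrArg _ (funext fun i => ?_)
      rw [rep_fst_none]
      show rho (rep w0 i) = gMul (rep w0 i) (rep (true, c1) i)
      rcases c1 with _ | (_ | a1) <;> rfl

lemma psi_map_fun0 (f : LL.Functions 0) (v : Fin 0 → Bool × OO A0) :
    Psi (Structure.funMap f v) = Structure.funMap f (Psi ∘ v) := by
  have hv : (Psi ∘ v : Fin 0 → UP) =
      fun j => Quotient.mk'' ((fun k : Fin 0 => rep (v k)) j) := by
    funext j; exact j.elim0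
  rw [hv, up_funMap f _]
  cases f with
  | zero => rfl
  | one => rfl

lemma psi_map_fun {n : ℕ} (f : LL.Functions n) (v : Fin n → Bool × OO A0) :
    Psi (Structure.funMap f v) = Structure.funMap f (Psi ∘ v) := by
  cases f with
  | add =>
    have hv : v = ![v 0, v 1] := by funext j; fin_cases j <;> rfl
    have hv2 : Psi ∘ v = ![Psi (v 0), Psi (v 1)] := by funext j; fin_cases j <;> rfl
    rw [hv2]
    conv_lhs => rw [hv]
    exact psi_map_fun2 LFn.add (v 0) (v 1)
  | mul =>
    have hv : v = ![v 0, v 1] := by funext j; fin_cases j <;> rfl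
    have hv2 : Psi ∘ v = ![Psi (v 0), Psi (v 1)] := by funext j; fin_cases j <;> rfl
    rw [hv2]
    conv_lhs => rw [hv]
    exact psi_map_fun2 LFn.mul (v 0) (v 1)
  | zero => exact psi_map_fun0 LFn.zero v
  | one => exact psi_map_fun0 LFn.one v

/-- The isomorphism between the product `Bool × OO A0` and the ultraproduct. -/
def EE : (Bool × OO A0) ≃[LL] UP where
  toEquiv := Equiv.ofBijective Psi ⟨psi_inj, psi_surj⟩
  map_fun' f v := psi_map_fun f v
  map_rel' r _ := Empty.elim r

end

end Paper

/-- **Theorem 6.1.** The class of directly indecomposable members of `V_L` is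
not axiomatizable by any set of first-order sentences. -/
theorem VL_DI_not_axiomatizable :
    ¬∃ S : Paper.LL.Theory,
      ∀ (A : Type) [Paper.LL.Structure A], Nonempty A →
        ((A ⊨ Paper.TL ∧ Paper.DirectlyIndecomposable Paper.LL A) ↔ A ⊨ S) := by
  rintro ⟨S, hS⟩
  -- Each finite gadget algebra is a directly indecomposable model of `TL`, hence models `S`.
  have hMi : ∀ i : Paper.PIdx, Paper.Mi i ⊨ S := by
    intro i
    have hcard : Fintype.card (Paper.Mi i) = 2 * i.1 + 5 := by
      simp only [Paper.Mi, Paper.Gd, Paper.OO, Fintype.card_sum, Fintype.card_option,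
        Fintype.card_fin]
      omega
    have hprime : Nat.Prime (Fintype.card (Paper.Mi i)) := by
      rw [hcard]; exact i.2.2
    have hnt : Nontrivial (Paper.Mi i) := ⟨Sum.inl none, Sum.inr none, by simp⟩
    exact (hS (Paper.Mi i) ⟨Sum.inl none⟩).mp
      ⟨Paper.gd_model_TL, Paper.di_of_prime _ hnt hprime⟩
  -- By Łoś's theorem, the ultraproduct models `S`.
  have hUP : Paper.UP ⊨ S := by
    rw [Language.Theory.model_iff]
    intro φ hφ
    rw [Language.Ultraproduct.sentence_realize]
    exact Filter.Eventually.of_forall fun i => by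
      have := hMi i
      exact Language.Theory.realize_sentence_of_mem (T := S) hφ
  -- Hence the ultraproduct is directly indecomposable...
  have hDI := ((hS Paper.UP inferInstance).mpr hUP).2
  -- ... which contradicts its explicit decomposition.
  exact hDI.2 ⟨Bool, Paper.OO Paper.A0, Paper.boolStr, Paper.ooStr,
    inferInstance, inferInstance, ⟨Paper.EE.symm⟩⟩
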